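/- Let D_0, …, D_{m−1} be subgroups of a group G, each with trivial center, which pairwise commute elementwise, and let P be the subgroup generated by ⋃_j D_j. For elements g_j ∈ D_j (j < m), the centralizer in P of the product g_0 g_1 ⋯ g_{m−1} equals the product C_{D_0}(g_0) · C_{D_1}(g_1) ⋯ C_{D_{m−1}}(g_{m−1}); consequently [P : C_P(g_0 ⋯ g_{m−1})] = ∏_{j < m} [D_j : C_{D_j}(g_j)]. -/

import Mathlib

private lemma noncommProd_univ_fin_eq_ofFn {M : Type*} [Monoid M] {m : ℕ} (f : Fin m → M) (comm) :
    Finset.noncommProd Finset.univ f comm = (List.ofFn f).prod := by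
  rw [List.ofFn_eq_map]
  exact Multiset.noncommProd_coe (List.map f (List.finRange m)) _

private lemma index_pi_dep {ι : Type*} [Fintype ι] {f : ι → Type*} [∀ i, Group (f i)]
    (H : ∀ i, Subgroup (f i)) :
    (Subgroup.pi Set.univ H).index = ∏ i, (H i).index := by
  simp_rw [Subgroup.index, ← Nat.card_pi]
  refine Nat.card_congr
    ((Quotient.congrRight (fun x y ↦ ?_)).trans (Setoid.piQuotientEquiv _).symm)
  rw [QuotientGroup.leftRel_pi]

/-- Let `D 0, …, D (m-1)` be subgroups of a group `G`, each with trivial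
center, which pairwise commute elementwise, and let `P = ⟨⋃ j, D j⟩`.  For elements
`g j ∈ D j`, the centralizer in `P` of the product `g 0 * ⋯ * g (m-1)` equals the
(elementwise) product `C_{D 0}(g 0) ⋯ C_{D (m-1)}(g (m-1))`; consequently
`[P : C_P(g 0 ⋯ g (m-1))] = ∏_{j < m} [D j : C_{D j}(g j)]`. -/
theorem stmt8 {G : Type*} [Group G] (m : ℕ) (D : Fin m → Subgroup G)
    (hcenter : ∀ i, Subgroup.center (D i) = ⊥)
    (hcomm : ∀ i j, i ≠ j → ∀ x ∈ D i, ∀ y ∈ D j, Commute x y)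
    (g : Fin m → G) (hg : ∀ j, g j ∈ D j) :
    ((Subgroup.centralizer {(List.ofFn g).prod} ⊓ (⨆ j, D j) : Subgroup G) : Set G) =
      {x : G | ∃ c : Fin m → G,
        (∀ j, c j ∈ Subgroup.centralizer {g j} ⊓ D j) ∧ (List.ofFn c).prod = x} ∧
    (Subgroup.centralizer {(List.ofFn g).prod}).relIndex (⨆ j, D j) =
      ∏ j : Fin m, (Subgroup.centralizer {g j}).relIndex (D j) := by
  have hcomm' : Pairwise fun i j : Fin m => ∀ x y : G, x ∈ D i → y ∈ D j → Commute x y :=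
    fun {i j} h x y hx hy => hcomm i j h x hx y hy
  -- independence of the family `D`
  have hind : iSupIndep D := by
    intro i
    rw [disjoint_iff_inf_le]
    intro x hx
    have hx1 : x ∈ D i := hx.1
    have hx2 : x ∈ ⨆ j ≠ i, D j := hx.2
    have hcent : x ∈ Subgroup.centralizer (D i : Set G) := by
      have : (⨆ j ≠ i, D j) ≤ Subgroup.centralizer (D i : Set G) := by
        refine iSup_le fun j => iSup_le fun hj => ?_
        intro y hy
        rw [Subgroup.mem_centralizer_iff]
        intro z hz
        exact (hcomm j i hj y hy z hz).symm.eq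
      exact this hx2
    have : (⟨x, hx1⟩ : D i) ∈ Subgroup.center (D i) := by
      rw [Subgroup.mem_center_iff]
      intro b
      ext
      simp only [Subgroup.coe_mul]
      exact Subgroup.mem_centralizer_iff.mp hcent b b.2
    rw [hcenter i, Subgroup.mem_bot] at this
    simpa using congrArg Subtype.val this
  set ψ : (∀ i, D i) →* G := Subgroup.noncommPiCoprod hcomm' with hψ
  have hinj : Function.Injective ψ := Subgroup.injective_noncommPiCoprod_of_iSupIndep hind
  have hrange : ψ.range = ⨆ j, D j := Subgroup.noncommPiCoprod_range
  have happly : ∀ d : ∀ i, D i, ψ d = (List.ofFn fun i => (d i : G)).prod := by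
    intro d
    rw [Subgroup.noncommPiCoprod_apply]
    exact noncommProd_univ_fin_eq_ofFn _ _
  set g' : ∀ i, D i := fun i => ⟨g i, hg i⟩ with hg'
  have hgprod : (List.ofFn g).prod = ψ g' := by rw [happly]
  -- key commutation criterion
  have hkey : ∀ d : ∀ i, D i,
      (ψ d ∈ Subgroup.centralizer {(List.ofFn g).prod} ↔
        ∀ i, (d i : G) * g i = g i * (d i : G)) := by
    intro d
    rw [Subgroup.mem_centralizer_singleton_iff, hgprod]
    constructor
    · intro h i
      have : ψ (d * g') = ψ (g' * d) := by
        simpa [map_mul] using h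
      have := hinj this
      have := congrFun this i
      simpa [Subtype.ext_iff] using this
    · intro h
      have : d * g' = g' * d := by
        funext i
        ext
        simpa using h i
      calc ψ d * ψ g' = ψ (d * g') := (map_mul _ _ _).symm
        _ = ψ (g' * d) := by rw [this]
        _ = ψ g' * ψ d := map_mul _ _ _
  constructor
  · ext x
    simp only [Subgroup.coe_inf, Set.mem_inter_iff, SetLike.mem_coe, Set.mem_setOf_eq]
    constructor
    · rintro ⟨hx1, hx2⟩
      rw [← hrange] at hx2
      obtain ⟨d, rfl⟩ := hx2
      refine ⟨fun i => (d i : G), fun j => ?_, (happly d).symm⟩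
      rw [Subgroup.mem_inf]
      exact ⟨Subgroup.mem_centralizer_singleton_iff.mpr ((hkey d).mp hx1 j), (d j).2⟩
    · rintro ⟨c, hc, rfl⟩
      set d : ∀ i, D i := fun i => ⟨c i, ((Subgroup.mem_inf).mp (hc i)).2⟩ with hd
      have hx : (List.ofFn c).prod = ψ d := by rw [happly]
      rw [hx]
      refine ⟨(hkey d).mpr fun i => ?_, ?_⟩
      · exact Subgroup.mem_centralizer_singleton_iff.mp ((Subgroup.mem_inf).mp (hc i)).1
      · rw [← hrange]; exact ⟨d, rfl⟩
  · -- index part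
    have hcomap : (Subgroup.centralizer {(List.ofFn g).prod}).comap ψ =
        Subgroup.pi Set.univ fun i => (Subgroup.centralizer {g i}).subgroupOf (D i) := by
      ext d
      rw [Subgroup.mem_comap, hkey d, Subgroup.mem_pi]
      constructor
      · intro h i _
        rw [Subgroup.mem_subgroupOf]
        exact Subgroup.mem_centralizer_singleton_iff.mpr (h i)
      · intro h i
        exact Subgroup.mem_centralizer_singleton_iff.mp
          (Subgroup.mem_subgroupOf.mp (h i (Set.mem_univ i)))
    calc (Subgroup.centralizer {(List.ofFn g).prod}).relIndex (⨆ j, D j)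
        = (Subgroup.centralizer {(List.ofFn g).prod}).relIndex ψ.range := by rw [hrange]
      _ = ((Subgroup.centralizer {(List.ofFn g).prod}).comap ψ).index :=
          (Subgroup.index_comap _ ψ).symm
      _ = (Subgroup.pi Set.univ fun i => (Subgroup.centralizer {g i}).subgroupOf (D i)).index := by
          rw [hcomap]
      _ = ∏ j : Fin m, (Subgroup.centralizer {g j}).relIndex (D j) := by
          rw [index_pi_dep]; rfl
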